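/- Let A be a unital C*-algebra. For any ε > 0 and any integer n > 0 there exists δ > 0 (depending only on ε and n) such that: whenever a₁, …, aₙ ∈ A are positive contractions with ‖aᵢaⱼ‖ < δ for all i ≠ j, there exist positive contractions b₁, …, bₙ ∈ A with bᵢbⱼ = 0 for all i ≠ j and ‖aᵢ − bᵢ‖ < ε for i = 1, …, n. -/

import Mathlib

open Filter Topology

noncomputable section

/-- Positivity in a `*`-ring, characterized (as valid in any C*-algebra) as being a
star-square: `x = y* y`. -/
def IsSqPos {C : Type*} [Mul C] [Star C] (x : C) : Prop := ∃ y : C, x = star y * y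

/-- Cuntz subequivalence: `a ≲ b` iff there is a sequence `vₙ` with `vₙ b vₙ* → a`. -/
def CuntzLE {C : Type*} [Ring C] [Star C] [Norm C] (a b : C) : Prop :=
  ∃ v : ℕ → C, Filter.Tendsto (fun n => ‖v n * b * star (v n) - a‖) Filter.atTop (nhds 0)

/-- A (ℂ-linear) completely positive map: positive matrices over the domain are sent to
positive matrices over the codomain, at every matrix level. -/
def IsCPMap {D E : Type*} [Ring D] [Star D] [SMul ℂ D] [Ring E] [Star E] [SMul ℂ E]
    (ψ : D → E) : Prop :=
  (∀ x y, ψ (x + y) = ψ x + ψ y) ∧ (∀ (c : ℂ) (x : D), ψ (c • x) = c • ψ x) ∧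
  ∀ (n : ℕ) (M : Matrix (Fin n) (Fin n) D), IsSqPos M → IsSqPos (M.map ψ)

/-- An order zero map: orthogonal positive elements are sent to orthogonal elements. -/
def IsOrderZero {D E : Type*} [Ring D] [Star D] [Ring E] [Star E] (ψ : D → E) : Prop :=
  ∀ x y : D, IsSqPos x → IsSqPos y → x * y = 0 → ψ x * ψ y = 0

/-- A simple C*-algebra: nonzero, and the only closed two-sided ideals are `⊥` and `⊤`. -/
def IsSimpleCStar (A : Type*) [NonUnitalNonAssocRing A] [TopologicalSpace A] : Prop :=
  (∃ a : A, a ≠ 0) ∧ ∀ I : TwoSidedIdeal A, IsClosed (I : Set A) → I = ⊥ ∨ I = ⊤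

/-- Stably finite: every isometry in every matrix algebra over `A` is a unitary. -/
def StablyFinite (A : Type*) [Ring A] [StarRing A] : Prop :=
  ∀ (n : ℕ) (v : Matrix (Fin n) (Fin n) A), star v * v = 1 → v * star v = 1

section SeqAlg

variable (R : Type*) [NormedRing R] [StarRing R] [NormedStarGroup R] [NormedAlgebra ℂ R]

/-- The algebra `ℓ∞(ℕ, R)` of bounded sequences in `R`. -/
def BddSeq : Subalgebra ℂ (ℕ → R) where
  carrier := {f | ∃ C, ∀ n, ‖f n‖ ≤ C}
  zero_mem' := ⟨0, fun n => by simp⟩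
  one_mem' := ⟨‖(1 : R)‖, fun n => by simp⟩
  add_mem' := by
    rintro f g ⟨C, hC⟩ ⟨D, hD⟩
    exact ⟨C + D, fun n => (norm_add_le _ _).trans (add_le_add (hC n) (hD n))⟩
  mul_mem' := by
    rintro f g ⟨C, hC⟩ ⟨D, hD⟩
    exact ⟨C * D, fun n => (norm_mul_le _ _).trans
      (mul_le_mul (hC n) (hD n) (norm_nonneg _) ((norm_nonneg _).trans (hC 0)))⟩
  algebraMap_mem' := fun c => ⟨‖algebraMap ℂ R c‖, fun n => by simp⟩

variable {R}

lemma BddSeq.bound (f : BddSeq R) : ∃ C, ∀ n, ‖(f : ℕ → R) n‖ ≤ C := f.2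

variable (R)

/-- The congruence on `ℓ∞(ℕ, R)` identifying sequences that agree up to a null sequence
(i.e. modulo `c₀(ℕ, R)`). -/
def seqCon : RingCon (BddSeq R) where
  r f g := Filter.Tendsto (fun n => ‖(f : ℕ → R) n - (g : ℕ → R) n‖) Filter.atTop (nhds 0)
  iseqv := by
    constructor
    · intro f
      simpa using (tendsto_const_nhds : Filter.Tendsto (fun _ : ℕ => (0:ℝ)) Filter.atTop (nhds 0))
    · intro f g h
      simpa [norm_sub_rev] using h
    · intro f g h h1 h2
      refine squeeze_zero (fun n => norm_nonneg _) (fun n => ?_) (by simpa using h1.add h2)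
      simpa [dist_eq_norm] using dist_triangle ((f : ℕ → R) n) ((g : ℕ → R) n) ((h : ℕ → R) n)
  add' := by
    intro w x y z h1 h2
    refine squeeze_zero (fun n => norm_nonneg _) (fun n => ?_) (by simpa using h1.add h2)
    have key : ((w + y : BddSeq R) : ℕ → R) n - ((x + z : BddSeq R) : ℕ → R) n
        = ((w : ℕ → R) n - (x : ℕ → R) n) + ((y : ℕ → R) n - (z : ℕ → R) n) := by
      simp only [Subalgebra.coe_add, Pi.add_apply]
      abel
    rw [key]
    exact norm_add_le _ _
  mul' := by
    intro w x y z h1 h2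
    obtain ⟨C, hC⟩ := BddSeq.bound w
    obtain ⟨D, hD⟩ := BddSeq.bound z
    refine squeeze_zero (fun n => norm_nonneg _) (fun n => ?_)
      (by simpa using (h2.const_mul C).add (h1.mul_const D))
    have key : ((w * y : BddSeq R) : ℕ → R) n - ((x * z : BddSeq R) : ℕ → R) n
        = (w : ℕ → R) n * ((y : ℕ → R) n - (z : ℕ → R) n)
          + ((w : ℕ → R) n - (x : ℕ → R) n) * (z : ℕ → R) n := by
      simp only [Subalgebra.coe_mul, Pi.mul_apply, mul_sub, sub_mul]
      abel
    rw [key]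
    calc ‖(w : ℕ → R) n * ((y : ℕ → R) n - (z : ℕ → R) n)
          + ((w : ℕ → R) n - (x : ℕ → R) n) * (z : ℕ → R) n‖
        ≤ ‖(w : ℕ → R) n * ((y : ℕ → R) n - (z : ℕ → R) n)‖
          + ‖((w : ℕ → R) n - (x : ℕ → R) n) * (z : ℕ → R) n‖ := norm_add_le _ _
      _ ≤ ‖(w : ℕ → R) n‖ * ‖(y : ℕ → R) n - (z : ℕ → R) n‖
          + ‖(w : ℕ → R) n - (x : ℕ → R) n‖ * ‖(z : ℕ → R) n‖ :=
            add_le_add (norm_mul_le _ _) (norm_mul_le _ _)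
      _ ≤ C * ‖(y : ℕ → R) n - (z : ℕ → R) n‖
          + ‖(w : ℕ → R) n - (x : ℕ → R) n‖ * D :=
            add_le_add (mul_le_mul_of_nonneg_right (hC n) (norm_nonneg _))
              (mul_le_mul_of_nonneg_left (hD n) (norm_nonneg _))

/-- The sequence algebra `R_∞ = ℓ∞(ℕ, R)/c₀(ℕ, R)`. -/
abbrev SeqAlg := (seqCon R).Quotient

variable {R}

/-- The quotient map `ℓ∞(ℕ, R) → R_∞`. -/
def SeqAlg.mk (f : BddSeq R) : SeqAlg R := Quotient.mk (seqCon R).toSetoid f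

/-- Pointwise star on bounded sequences. -/
def BddSeq.star' (f : BddSeq R) : BddSeq R :=
  ⟨fun n => star ((f : ℕ → R) n), by
    obtain ⟨C, hC⟩ := BddSeq.bound f
    exact ⟨C, fun n => by rw [norm_star]; exact hC n⟩⟩

noncomputable instance : Star (SeqAlg R) :=
  ⟨Quotient.map BddSeq.star' (by
    intro f g h
    have key : (fun n => ‖(BddSeq.star' f : ℕ → R) n - (BddSeq.star' g : ℕ → R) n‖)
        = fun n => ‖(f : ℕ → R) n - (g : ℕ → R) n‖ := by
      funext n
      show ‖star ((f : ℕ → R) n) - star ((g : ℕ → R) n)‖ = _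
      rw [← star_sub, norm_star]
    show Filter.Tendsto _ Filter.atTop (nhds 0)
    rw [key]
    exact h)⟩

/-- Pointwise scalar multiplication on bounded sequences. -/
def BddSeq.csmul (c : ℂ) (f : BddSeq R) : BddSeq R :=
  ⟨fun n => c • (f : ℕ → R) n, by
    obtain ⟨C, hC⟩ := BddSeq.bound f
    exact ⟨‖c‖ * C, fun n => by
      rw [norm_smul]
      exact mul_le_mul_of_nonneg_left (hC n) (norm_nonneg _)⟩⟩

noncomputable instance : SMul ℂ (SeqAlg R) :=
  ⟨fun c x => Quotient.map (BddSeq.csmul c) (by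
    intro f g h
    have key : (fun n => ‖(BddSeq.csmul c f : ℕ → R) n - (BddSeq.csmul c g : ℕ → R) n‖)
        = fun n => ‖c‖ * ‖(f : ℕ → R) n - (g : ℕ → R) n‖ := by
      funext n
      show ‖c • (f : ℕ → R) n - c • (g : ℕ → R) n‖ = _
      rw [← smul_sub, norm_smul]
    show Filter.Tendsto _ Filter.atTop (nhds 0)
    rw [key]
    simpa using h.const_mul ‖c‖) x⟩

/-- The norm on the sequence algebra: the `limsup` of the norms of (any representative)
sequence. -/
noncomputable instance : Norm (SeqAlg R) :=
  ⟨fun x => Filter.limsup (fun n => ‖((Quotient.out x : BddSeq R) : ℕ → R) n‖) Filter.atTop⟩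

/-- The canonical embedding of `R` into its sequence algebra `R_∞` as constant sequences. -/
def toSeq (a : R) : SeqAlg R :=
  SeqAlg.mk ⟨fun _ => a, ⟨‖a‖, fun _ => le_rfl⟩⟩

end SeqAlg

/-- A `*`-homomorphism `φ : A → B` is *tracially sequentially-split by order zero map* if
for every nonzero positive `z ∈ A_∞` there are a completely positive order zero map
`ψ : B → A_∞` and a nonzero positive `g ∈ A_∞ ∩ A'` with `ψ(φ(a)) = a·g` for all `a ∈ A`
and `1 - g ≲ z` in `A_∞`. -/
def TraciallySeqSplit {A : Type*} [NormedRing A] [StarRing A] [NormedStarGroup A]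
    [NormedAlgebra ℂ A] {B : Type*} [Ring B] [Star B] [SMul ℂ B] (φ : A → B) : Prop :=
  ∀ z : SeqAlg A, IsSqPos z → z ≠ 0 →
    ∃ (ψ : B → SeqAlg A) (g : SeqAlg A),
      IsCPMap ψ ∧ IsOrderZero ψ ∧ IsSqPos g ∧ g ≠ 0 ∧
      (∀ a : A, toSeq a * g = g * toSeq a) ∧
      (∀ a : A, ψ (φ a) = toSeq a * g) ∧
      CuntzLE (1 - g) z

end


section
variable {A : Type*} [CStarAlgebra A]

open Polynomial in
private def commSubalg (x : A) {a : A} (ha : IsSelfAdjoint a) : Subalgebra ℝ C(spectrum ℝ a, ℝ) where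
  carrier := {g | Commute x (cfcHom ha (R := ℝ) g)}
  mul_mem' := by
    intro f1 f2 hf1 hf2
    show Commute x (cfcHom ha (R := ℝ) (f1 * f2))
    rw [map_mul]
    exact Commute.mul_right hf1 hf2
  add_mem' := by
    intro f1 f2 hf1 hf2
    show Commute x (cfcHom ha (R := ℝ) (f1 + f2))
    rw [map_add]
    exact Commute.add_right hf1 hf2
  algebraMap_mem' := by
    intro r
    show Commute x (cfcHom ha (R := ℝ) (algebraMap ℝ C(spectrum ℝ a, ℝ) r))
    rw [AlgHomClass.commutes]
    exact (Algebra.commutes r x).symm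

open Polynomial in
lemma aux_commute_cfcHom {x a : A} (ha : IsSelfAdjoint a)
    (hx : Commute x a) (g : C(spectrum ℝ a, ℝ)) : Commute x (cfcHom ha (R := ℝ) g) := by
  have hcont : Continuous (cfcHom ha (R := ℝ)) := (cfcHom_isClosedEmbedding ha).continuous
  have hS : IsClosed ((commSubalg x ha : Subalgebra ℝ C(spectrum ℝ a, ℝ)) : Set C(spectrum ℝ a, ℝ)) := by
    have h : ((commSubalg x ha : Subalgebra ℝ C(spectrum ℝ a, ℝ)) : Set C(spectrum ℝ a, ℝ))
        = {g | x * cfcHom ha (R := ℝ) g = cfcHom ha (R := ℝ) g * x} := rfl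
    rw [h]
    exact isClosed_eq (continuous_const.mul hcont) (hcont.mul continuous_const)
  have hle : polynomialFunctions (spectrum ℝ a) ≤ commSubalg x ha := by
    rw [polynomialFunctions.eq_adjoin_X]
    apply Algebra.adjoin_le
    intro g hg
    rw [Set.mem_singleton_iff] at hg
    subst hg
    show Commute x (cfcHom ha (R := ℝ) _)
    rw [toContinuousMapOnAlgHom_apply, toContinuousMapOn_X_eq_restrict_id, cfcHom_id ha]
    exact hx
  have h2 := Subalgebra.topologicalClosure_minimal hle hS
  rw [polynomialFunctions.topologicalClosure (spectrum ℝ a)] at h2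
  exact h2 (by trivial)

lemma aux_commute_cfc {x a : A} (ha : IsSelfAdjoint a)
    (hx : Commute x a) (f : ℝ → ℝ) : Commute x (cfc f a) := by
  by_cases hf : ContinuousOn f (spectrum ℝ a)
  · rw [cfc_apply f a ha hf]
    exact aux_commute_cfcHom ha hx _
  · rw [cfc_apply_of_not_continuousOn a hf]
    exact Commute.zero_right x

lemma cont_h {η : ℝ} : Continuous (fun t : ℝ => max (t - η) 0) :=
  (continuous_id.sub continuous_const).max continuous_const

lemma cont_m {η : ℝ} (hη : 0 < η) :
    Continuous (fun t : ℝ => max (t - η) 0 / max t η) :=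
  Continuous.div cont_h (continuous_id.max continuous_const)
    (fun t => (lt_max_iff.mpr (Or.inr hη)).ne')

lemma cont_g {η : ℝ} : Continuous (fun t : ℝ => max (1 - (2/η) * t) 0) :=
  (continuous_const.sub (continuous_const.mul continuous_id)).max continuous_const

lemma cont_sh {η : ℝ} : Continuous (fun t : ℝ => Real.sqrt (max (t - η) 0)) :=
  Real.continuous_sqrt.comp cont_h

lemma aux_factor {η : ℝ} (hη : 0 < η) (e : A) (he : IsSelfAdjoint e) :
    cfc (fun t : ℝ => max (t - η) 0) e
        = cfc (fun t : ℝ => max (t - η) 0 / max t η) e * e ∧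
      cfc (fun t : ℝ => max (t - η) 0) e
        = e * cfc (fun t : ℝ => max (t - η) 0 / max t η) e := by
  have hfun1 : (fun t : ℝ => max (t - η) 0)
      = fun t : ℝ => (max (t - η) 0 / max t η) * t := by
    funext t
    rcases le_or_gt t η with h | h
    · rw [max_eq_right (by linarith), zero_div, zero_mul]
    · rw [max_eq_left (by linarith : (0:ℝ) ≤ t - η), max_eq_left h.le,
        div_mul_cancel₀ _ (ne_of_gt (by linarith : (0:ℝ) < t))]
  have hfun2 : (fun t : ℝ => max (t - η) 0)
      = fun t : ℝ => t * (max (t - η) 0 / max t η) := by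
    rw [hfun1]; funext t; ring
  constructor
  · conv_lhs => rw [hfun1]
    rw [cfc_mul _ _ e (cont_m hη).continuousOn continuous_id'.continuousOn, cfc_id' ℝ e he]
  · conv_lhs => rw [hfun2]
    rw [cfc_mul _ _ e continuous_id'.continuousOn (cont_m hη).continuousOn, cfc_id' ℝ e he]

variable [PartialOrder A] [StarOrderedRing A]

lemma aux_smul_nonneg {c : ℝ} (hc : 0 ≤ c) {x : A} (hx : 0 ≤ x) : 0 ≤ c • x := by
  have h1 : CFC.sqrt x * CFC.sqrt x = x := CFC.sqrt_mul_sqrt_self x hx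
  have hs : IsSelfAdjoint (CFC.sqrt x) := (CFC.sqrt_nonneg (a := x)).isSelfAdjoint
  have key : c • x = star (Real.sqrt c • CFC.sqrt x) * (Real.sqrt c • CFC.sqrt x) := by
    rw [star_smul, star_trivial, hs.star_eq, smul_mul_smul_comm, Real.mul_self_sqrt hc, h1]
  rw [key]
  exact star_mul_self_nonneg _

lemma aux_key_orth {η : ℝ} (hη : 0 < η) {e s : A} (he : 0 ≤ e) (hs : 0 ≤ s)
    (hes : e * s = e * e) (hse : s * e = e * e) :
    cfc (fun t : ℝ => max (t - η) 0) e * cfc (fun t : ℝ => max (1 - (2/η) * t) 0) s = 0 := by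
  have hesa : IsSelfAdjoint e := he.isSelfAdjoint
  have hssa : IsSelfAdjoint s := hs.isSelfAdjoint
  set q : A := cfc (fun t : ℝ => max (t - η) 0) e with hq_def
  set p : A := cfc (fun t : ℝ => max (1 - (2/η) * t) 0) s with hp_def
  set r : A := cfc (fun t : ℝ => Real.sqrt (max (t - η) 0)) e with hr_def
  have hpsa : IsSelfAdjoint p := cfc_predicate _ s
  have hqsa : IsSelfAdjoint q := cfc_predicate _ e
  have hrsa : IsSelfAdjoint r := cfc_predicate _ e
  have hrr : r * r = q := by
    rw [hr_def, hq_def, ← cfc_mul _ _ e cont_sh.continuousOn cont_sh.continuousOn]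
    exact cfc_congr fun t _ => Real.mul_self_sqrt (le_max_right _ _)
  have hcomm_es : Commute e s := hes.trans hse.symm
  have hep : Commute e p := aux_commute_cfc hssa hcomm_es _
  have hqp : Commute q p := (aux_commute_cfc hesa hep.symm _).symm
  have hrp : Commute r p := (aux_commute_cfc hesa hep.symm _).symm
  have hrs : Commute r s := (aux_commute_cfc hesa hcomm_es.symm _).symm
  obtain ⟨hfac1, _⟩ := aux_factor hη e hesa
  have hqs : q * s = q * e := by
    rw [hq_def, hfac1, mul_assoc, mul_assoc, hes]
  have hspec : ∀ t ∈ spectrum ℝ s, 0 ≤ t := fun t ht => spectrum_nonneg_of_nonneg hs ht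
  have hq0 : 0 ≤ q := cfc_nonneg fun t _ => le_max_right _ _
  -- I1 : η • q ≤ q * e
  have hI1 : η • q ≤ q * e := by
    have e1 : cfc (fun t : ℝ => η • max (t - η) 0) e = η • q := by
      rw [hq_def]; exact cfc_smul η _ e cont_h.continuousOn
    have e2 : cfc (fun t : ℝ => max (t - η) 0 * t) e = q * e := by
      rw [hq_def, cfc_mul _ _ e cont_h.continuousOn continuous_id'.continuousOn, cfc_id' ℝ e hesa]
    rw [← e1, ← e2]
    refine cfc_mono (fun t _ => ?_) (by exact ((continuous_const : Continuous fun _ : ℝ => η).smul (cont_h (η := η))).continuousOn)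
      (by exact (cont_h.mul continuous_id).continuousOn)
    rcases le_or_gt t η with h | h
    · rw [max_eq_right (by linarith)]; simp
    · rw [max_eq_left (by linarith : (0:ℝ) ≤ t - η), smul_eq_mul]
      nlinarith
  -- I2 : p * s * p ≤ (η/2) • (p * p)
  have hpsp : p * s * p
      = cfc (fun t : ℝ => max (1 - (2/η) * t) 0 * (t * max (1 - (2/η) * t) 0)) s := by
    rw [hp_def, cfc_mul (fun t : ℝ => max (1 - (2/η) * t) 0) (fun t : ℝ => t * max (1 - (2/η) * t) 0) s cont_g.continuousOn (continuous_id'.mul cont_g).continuousOn,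
      cfc_mul _ _ s continuous_id'.continuousOn cont_g.continuousOn, cfc_id' ℝ s hssa, mul_assoc]
  have hY : cfc (fun t : ℝ => (η/2) • (max (1 - (2/η) * t) 0 * max (1 - (2/η) * t) 0)) s
      = (η/2) • (p * p) := by
    rw [hp_def, ← cfc_mul _ _ s cont_g.continuousOn cont_g.continuousOn]
    exact cfc_smul (η/2) _ s (cont_g.mul cont_g).continuousOn
  have hI2 : p * s * p ≤ (η/2) • (p * p) := by
    rw [hpsp, ← hY]
    refine cfc_mono (fun t ht => ?_)
      (by exact (cont_g.mul (continuous_id'.mul cont_g)).continuousOn)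
      (by exact ((continuous_const : Continuous fun _ : ℝ => η/2).smul ((cont_g (η := η)).mul (cont_g (η := η)))).continuousOn)
    have ht0 := hspec t ht
    have hc1 : (2/η) * (η/2) = 1 := by field_simp
    have hc0 : (0:ℝ) < 2/η := by positivity
    rcases le_or_gt t (η/2) with h | h
    · have hg0 : (0:ℝ) ≤ max (1 - (2/η) * t) 0 := le_max_right _ _
      have hrw : max (1 - (2/η) * t) 0 * (t * max (1 - (2/η) * t) 0)
          = t * (max (1 - (2/η) * t) 0 * max (1 - (2/η) * t) 0) := by ring
      rw [hrw, smul_eq_mul]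
      nlinarith [mul_nonneg hg0 hg0]
    · have hg0 : max (1 - (2/η) * t) 0 = 0 := by
        rw [max_eq_right]
        nlinarith
      rw [hg0]; simp
  -- chain
  have step1 : η • (p * q * p) ≤ p * (q * e) * p := by
    have h1 : η • (p * q * p) = star p * (η • q) * p := by
      rw [hpsa.star_eq, mul_smul_comm, smul_mul_assoc]
    have h2 := star_left_conjugate_le_conjugate hI1 p
    rw [hpsa.star_eq] at h2
    rw [h1, hpsa.star_eq]
    exact h2
  have step2 : p * (q * e) * p = q * (p * s * p) := by
    rw [← hqs]
    calc p * (q * s) * p = (p * q) * s * p := by rw [← mul_assoc]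
      _ = (q * p) * s * p := by rw [hqp.eq]
      _ = q * (p * s * p) := by rw [mul_assoc, mul_assoc, mul_assoc]
  have hrX : Commute r (p * s * p) := by
    rw [mul_assoc]; exact hrp.mul_right (hrs.mul_right hrp)
  have hrY : Commute r ((η/2) • (p * p)) := (hrp.mul_right hrp).smul_right (η/2)
  have step3 : q * (p * s * p) ≤ q * ((η/2) • (p * p)) := by
    have hx : q * (p * s * p) = r * (p * s * p) * r := by
      calc q * (p * s * p) = r * r * (p * s * p) := by rw [hrr]
        _ = r * (r * (p * s * p)) := by rw [mul_assoc]
        _ = r * ((p * s * p) * r) := by rw [hrX.eq]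
        _ = r * (p * s * p) * r := by rw [← mul_assoc]
    have hy : q * ((η/2) • (p * p)) = r * ((η/2) • (p * p)) * r := by
      calc q * ((η/2) • (p * p)) = r * r * ((η/2) • (p * p)) := by rw [hrr]
        _ = r * (r * ((η/2) • (p * p))) := by rw [mul_assoc]
        _ = r * (((η/2) • (p * p)) * r) := by rw [hrY.eq]
        _ = r * ((η/2) • (p * p)) * r := by rw [← mul_assoc]
    rw [hx, hy]
    have := star_left_conjugate_le_conjugate hI2 r
    rwa [hrsa.star_eq] at this
  have step4 : q * ((η/2) • (p * p)) = (η/2) • (p * q * p) := by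
    rw [mul_smul_comm]
    congr 1
    calc q * (p * p) = (q * p) * p := by rw [mul_assoc]
      _ = (p * q) * p := by rw [hqp.eq]
  have hchain : η • (p * q * p) ≤ (η/2) • (p * q * p) :=
    le_trans step1 (le_of_le_of_eq (le_of_eq_of_le step2 step3) step4)
  -- conclude p * q * p = 0
  have hz0 : 0 ≤ p * q * p := by
    have := star_left_conjugate_nonneg hq0 p
    rwa [hpsa.star_eq] at this
  have hzneg : p * q * p ≤ 0 := by
    have h1 : (0:A) ≤ (η/2) • (p * q * p) - η • (p * q * p) := sub_nonneg.mpr hchain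
    have h2 : (η/2) • (p * q * p) - η • (p * q * p) = (η/2 - η) • (p * q * p) := by
      rw [sub_smul]
    have h3 : (0:A) ≤ (-(η/2)) • (p * q * p) := by
      rw [show (-(η/2) : ℝ) = η/2 - η by ring, ← h2]; exact h1
    have h4 : (0:A) ≤ (2/η) • ((-(η/2)) • (p * q * p)) :=
      aux_smul_nonneg (by positivity) h3
    rw [smul_smul, show (2/η) * (-(η/2)) = -1 by field_simp, neg_one_smul] at h4
    exact neg_nonneg.mp h4
  have hz : p * q * p = 0 := le_antisymm hzneg hz0
  have hrp0 : r * p = 0 := by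
    have : star (r * p) * (r * p) = 0 := by
      rw [star_mul, hrsa.star_eq, hpsa.star_eq]
      calc p * r * (r * p) = p * (r * r) * p := by rw [mul_assoc, mul_assoc, mul_assoc]
        _ = p * q * p := by rw [hrr]
        _ = 0 := hz
    exact (CStarRing.star_mul_self_eq_zero_iff _).mp this
  calc q * p = r * r * p := by rw [hrr]
    _ = r * (r * p) := by rw [mul_assoc]
    _ = 0 := by rw [hrp0, mul_zero]
end

section
variable {A : Type*} [CStarAlgebra A]


lemma cont_m3 {η : ℝ} (hη : 0 < η) :
    Continuous (fun t : ℝ => min (2/η) ((max t (η/2))⁻¹)) :=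
  continuous_const.min ((continuous_id'.max continuous_const).inv₀
    (fun t => ne_of_gt (lt_max_of_lt_right (by positivity))))

section ord
variable [PartialOrder A] [StarOrderedRing A]

-- L2
lemma aux_close (η : ℝ) (hη : 0 < η) {e : A} (he : 0 ≤ e) :
    ‖e - cfc (fun t : ℝ => max (t - η) 0) e‖ ≤ η := by
  have heq : cfc (fun t : ℝ => t - max (t - η) 0) e = e - cfc (fun t : ℝ => max (t - η) 0) e := by
    rw [cfc_sub (fun t : ℝ => t) (fun t : ℝ => max (t - η) 0) e
      continuous_id'.continuousOn cont_h.continuousOn, cfc_id' ℝ e he.isSelfAdjoint]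
  rw [← heq]
  refine norm_cfc_le hη.le fun t ht => ?_
  have ht0 : 0 ≤ t := spectrum_nonneg_of_nonneg he ht
  rw [Real.norm_eq_abs, abs_le]
  rcases le_or_gt t η with h | h
  · rw [max_eq_right (by linarith)]
    constructor <;> linarith
  · rw [max_eq_left (by linarith : (0:ℝ) ≤ t - η)]
    constructor <;> linarith

-- L3
lemma aux_norm_h [Nontrivial A] (η : ℝ) (hη : 0 < η) {e : A} (he : 0 ≤ e) (he1 : ‖e‖ ≤ 1) :
    ‖cfc (fun t : ℝ => max (t - η) 0) e‖ ≤ 1 := by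
  refine norm_cfc_le zero_le_one fun t ht => ?_
  have hle : t ≤ 1 := le_trans (le_trans (le_abs_self t) (spectrum.norm_le_norm_of_mem ht)) he1
  rw [Real.norm_eq_abs, abs_le]
  constructor
  · have : (0:ℝ) ≤ max (t - η) 0 := le_max_right _ _
    linarith
  · apply max_le <;> linarith

-- L4
lemma aux_norm_g (η : ℝ) (hη : 0 < η) {s : A} (hs : 0 ≤ s) :
    ‖cfc (fun t : ℝ => max (1 - (2/η) * t) 0) s‖ ≤ 1 := by
  refine norm_cfc_le zero_le_one fun t ht => ?_
  have ht0 : 0 ≤ t := spectrum_nonneg_of_nonneg hs ht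
  have h2 : (0:ℝ) ≤ (2/η) * t := by positivity
  rw [Real.norm_eq_abs, abs_le]
  constructor
  · have : (0:ℝ) ≤ max (1 - (2/η) * t) 0 := le_max_right _ _
    linarith
  · apply max_le <;> linarith

-- L5
lemma aux_one_sub_p (η : ℝ) (hη : 0 < η) {s : A} (hs : 0 ≤ s) :
    (1 : A) - cfc (fun t : ℝ => max (1 - (2/η) * t) 0) s
      = cfc (fun t : ℝ => min (2/η) ((max t (η/2))⁻¹)) s * s
    ∧ ‖cfc (fun t : ℝ => min (2/η) ((max t (η/2))⁻¹)) s‖ ≤ 2/η := by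
  constructor
  · have h1 : cfc (fun t : ℝ => 1 - max (1 - (2/η) * t) 0) s
        = (1 : A) - cfc (fun t : ℝ => max (1 - (2/η) * t) 0) s := by
      rw [cfc_sub (fun _ : ℝ => (1:ℝ)) (fun t : ℝ => max (1 - (2/η) * t) 0) s
        continuousOn_const cont_g.continuousOn, cfc_const 1 s hs.isSelfAdjoint, map_one]
    have h2 : cfc (fun t : ℝ => 1 - max (1 - (2/η) * t) 0) s
        = cfc (fun t : ℝ => min (2/η) ((max t (η/2))⁻¹) * t) s := by
      apply cfc_congr
      intro t ht
      show 1 - max (1 - (2/η) * t) 0 = min (2/η) ((max t (η/2))⁻¹) * t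
      have ht0 : 0 ≤ t := spectrum_nonneg_of_nonneg hs ht
      have hc1 : (2/η) * (η/2) = 1 := by field_simp
      rcases le_or_gt t (η/2) with h | h
      · rw [max_eq_right h, show ((η/2 : ℝ))⁻¹ = 2/η by rw [inv_div], min_self,
          max_eq_left (by nlinarith : (0:ℝ) ≤ 1 - (2/η) * t)]
        ring
      · have htpos : (0:ℝ) < t := lt_trans (by positivity) h
        rw [max_eq_left h.le, min_eq_right (by
          rw [inv_le_comm₀ htpos (by positivity : (0:ℝ) < 2/η)]
          calc (2/η)⁻¹ = η/2 := by rw [inv_div]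
            _ ≤ t := h.le),
          max_eq_right (by nlinarith : 1 - (2/η) * t ≤ (0:ℝ)), inv_mul_cancel₀ htpos.ne']
        ring
    rw [← h1, h2, cfc_mul _ _ s (cont_m3 hη).continuousOn continuous_id'.continuousOn,
      cfc_id' ℝ s hs.isSelfAdjoint]
  · refine norm_cfc_le (by positivity) fun t ht => ?_
    have h1 : (0:ℝ) < max t (η/2) := lt_max_of_lt_right (by positivity)
    rw [Real.norm_eq_abs, abs_le]
    constructor
    · have : (0:ℝ) ≤ min (2/η) ((max t (η/2))⁻¹) :=
        le_min (by positivity) (by positivity)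
      linarith [this, (by positivity : (0:ℝ) < 2/η)]
    · exact min_le_left _ _
end ord

end


section sqpos
variable {A : Type*} [CStarAlgebra A] [PartialOrder A] [StarOrderedRing A]
lemma aux_isSqPos_iff {x : A} : IsSqPos x ↔ 0 ≤ x := by
  constructor
  · rintro ⟨y, rfl⟩
    exact star_mul_self_nonneg y
  · intro hx
    refine ⟨CFC.sqrt x, ?_⟩
    rw [((CFC.sqrt_nonneg (a := x)).isSelfAdjoint).star_eq, CFC.sqrt_mul_sqrt_self x hx]
end sqpos


lemma aux_main (A : Type*) [CStarAlgebra A] [PartialOrder A] [StarOrderedRing A] [Nontrivial A]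
    (n : ℕ) :
    ∀ ε : ℝ, 0 < ε → ∃ δ : ℝ, 0 < δ ∧ ∀ a : Fin n → A,
      (∀ i, 0 ≤ a i ∧ ‖a i‖ ≤ 1) →
      (∀ i j, i ≠ j → ‖a i * a j‖ < δ) →
      ∃ b : Fin n → A,
        (∀ i, 0 ≤ b i ∧ ‖b i‖ ≤ 1) ∧ (∀ i j, i ≠ j → b i * b j = 0) ∧
        (∀ i, ‖a i - b i‖ < ε) := by
  induction n with
  | zero =>
    intro ε hε
    exact ⟨1, one_pos, fun a ha _ => ⟨a, ha, fun i => i.elim0, fun i => i.elim0⟩⟩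
  | succ n IH =>
    intro ε hε
    have hη : (0:ℝ) < ε/2 := by positivity
    set η : ℝ := ε/2 with hη_def
    set c : ℝ := ε^2/(32*(n+1 : ℝ)) with hc_def
    have hc : 0 < c := by positivity
    have hε' : 0 < min (ε/2) c := lt_min (by positivity) hc
    obtain ⟨δ₀, hδ₀, H⟩ := IH (min (ε/2) c) hε'
    refine ⟨min δ₀ c, lt_min hδ₀ hc, ?_⟩
    intro a ha hab
    obtain ⟨b, hb1, hb2, hb3⟩ := H (fun i => a i.castSucc) (fun i => ha _)
      (fun i j hij => lt_of_lt_of_le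
        (hab _ _ (fun h => hij (Fin.castSucc_injective n h))) (min_le_left _ _))
    set s : A := ∑ i, b i with hs_def
    have hs0 : 0 ≤ s := Finset.sum_nonneg fun i _ => (hb1 i).1
    have hcomm1 : ∀ i, b i * s = b i * b i := by
      intro i
      rw [hs_def, Finset.mul_sum]
      exact Finset.sum_eq_single i (fun j _ hji => hb2 i j (Ne.symm hji)) (by simp)
    have hcomm2 : ∀ i, s * b i = b i * b i := by
      intro i
      rw [hs_def, Finset.sum_mul]
      exact Finset.sum_eq_single i (fun j _ hji => hb2 j i hji) (by simp)
    set aN : A := a (Fin.last n) with haN_def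
    have haN0 : 0 ≤ aN := (ha _).1
    have haN1 : ‖aN‖ ≤ 1 := (ha _).2
    have haNsa : IsSelfAdjoint aN := haN0.isSelfAdjoint
    set p : A := cfc (fun t : ℝ => max (1 - (2/η) * t) 0) s with hp_def
    have hpsa : IsSelfAdjoint p := cfc_predicate _ s
    have hpn : ‖p‖ ≤ 1 := aux_norm_g η hη hs0
    set q : Fin n → A := fun i => cfc (fun t : ℝ => max (t - η) 0) (b i) with hq_def
    have hq0 : ∀ i, 0 ≤ q i := fun i => cfc_nonneg fun t _ => le_max_right _ _
    have hqsa : ∀ i, IsSelfAdjoint (q i) := fun i => (hq0 i).isSelfAdjoint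
    set bN : A := p * aN * p with hbN_def
    have hbN0 : 0 ≤ bN := by
      have := star_left_conjugate_nonneg haN0 p
      rwa [hpsa.star_eq] at this
    have hbNsa : IsSelfAdjoint bN := hbN0.isSelfAdjoint
    have hbNn : ‖bN‖ ≤ 1 := by
      have h1 := norm_mul_le (p * aN) p
      have h2 := norm_mul_le p aN
      nlinarith [norm_nonneg (p * aN), norm_nonneg p, norm_nonneg aN, hpn, haN1]
    have hqp : ∀ i, q i * p = 0 := fun i =>
      aux_key_orth hη (hb1 i).1 hs0 (hcomm1 i) (hcomm2 i)
    have hpq : ∀ i, p * q i = 0 := by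
      intro i
      have h := congrArg star (hqp i)
      rwa [star_mul, (hqsa i).star_eq, hpsa.star_eq, star_zero] at h
    have hqbN : ∀ i, q i * bN = 0 := by
      intro i
      rw [hbN_def, ← mul_assoc, ← mul_assoc, hqp i, zero_mul, zero_mul]
    have hbNq : ∀ i, bN * q i = 0 := by
      intro i
      rw [hbN_def, mul_assoc, mul_assoc, hpq i, mul_zero, mul_zero]
    have hqq : ∀ i j, i ≠ j → q i * q j = 0 := by
      intro i j hij
      obtain ⟨hf1, -⟩ := aux_factor hη (b i) (hb1 i).1.isSelfAdjoint
      obtain ⟨-, hf2⟩ := aux_factor hη (b j) (hb1 j).1.isSelfAdjoint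
      rw [hq_def]
      show cfc (fun t : ℝ => max (t - η) 0) (b i) * cfc (fun t : ℝ => max (t - η) 0) (b j) = 0
      rw [hf1, hf2, mul_assoc, ← mul_assoc (b i), hb2 i j hij, zero_mul, mul_zero]
    -- estimates
    have hclose : ∀ i, ‖a (Fin.castSucc i) - q i‖ < ε := by
      intro i
      have h1 : ‖a (Fin.castSucc i) - b i‖ < min (ε/2) c := hb3 i
      have h2 : ‖b i - q i‖ ≤ η := aux_close η hη (hb1 i).1
      calc ‖a (Fin.castSucc i) - q i‖
          = ‖(a (Fin.castSucc i) - b i) + (b i - q i)‖ := by rw [sub_add_sub_cancel]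
        _ ≤ ‖a (Fin.castSucc i) - b i‖ + ‖b i - q i‖ := norm_add_le _ _
        _ < min (ε/2) c + η := by linarith
        _ ≤ ε/2 + ε/2 := by
            have := min_le_left (ε/2) c
            rw [hη_def]
            linarith
        _ = ε := by ring
    have hqn : ∀ i, ‖q i‖ ≤ 1 := fun i => aux_norm_h η hη (hb1 i).1 (hb1 i).2
    -- last index estimate
    obtain ⟨hop, hwn⟩ := aux_one_sub_p η hη hs0
    have hsaN : ‖s * aN‖ ≤ (n : ℝ) * (2 * c) := by
      have hterm : ∀ i : Fin n, ‖b i * aN‖ ≤ 2 * c := by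
        intro i
        have h1 : b i * aN = (b i - a (Fin.castSucc i)) * aN + a (Fin.castSucc i) * aN := by
          rw [sub_mul, sub_add_cancel]
        have h2 : ‖(b i - a (Fin.castSucc i)) * aN‖ ≤ min (ε/2) c := by
          calc ‖(b i - a (Fin.castSucc i)) * aN‖
              ≤ ‖b i - a (Fin.castSucc i)‖ * ‖aN‖ := norm_mul_le _ _
            _ ≤ ‖b i - a (Fin.castSucc i)‖ * 1 := by gcongr
            _ = ‖b i - a (Fin.castSucc i)‖ := mul_one _
            _ ≤ min (ε/2) c := by
                rw [norm_sub_rev]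
                exact (hb3 i).le
        have h3 : ‖a (Fin.castSucc i) * aN‖ < min δ₀ c := by
          exact hab _ _ (Fin.castSucc_lt_last i).ne
        calc ‖b i * aN‖ ≤ ‖(b i - a (Fin.castSucc i)) * aN‖ + ‖a (Fin.castSucc i) * aN‖ := by
              rw [h1]; exact norm_add_le _ _
          _ ≤ min (ε/2) c + min δ₀ c := by linarith
          _ ≤ c + c := by
              have := min_le_right (ε/2) c
              have := min_le_right δ₀ c
              linarith
          _ = 2 * c := by ring
      calc ‖s * aN‖ = ‖∑ i, b i * aN‖ := by rw [hs_def, Finset.sum_mul]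
        _ ≤ ∑ i : Fin n, ‖b i * aN‖ := norm_sum_le _ _
        _ ≤ ∑ _i : Fin n, (2 * c) := Finset.sum_le_sum fun i _ => hterm i
        _ = (n : ℝ) * (2 * c) := by simp [Finset.sum_const, mul_comm]
    have honep : ‖((1:A) - p) * aN‖ ≤ (2/η) * ((n:ℝ) * (2 * c)) := by
      calc ‖((1:A) - p) * aN‖
          = ‖cfc (fun t : ℝ => min (2/η) ((max t (η/2))⁻¹)) s * (s * aN)‖ := by
            rw [hop, mul_assoc]
        _ ≤ ‖cfc (fun t : ℝ => min (2/η) ((max t (η/2))⁻¹)) s‖ * ‖s * aN‖ := norm_mul_le _ _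
        _ ≤ (2/η) * ((n:ℝ) * (2 * c)) := by
            gcongr
    have hlast : ‖aN - bN‖ < ε := by
      have hdec : aN - bN = ((1:A) - p) * aN + p * (aN * ((1:A) - p)) := by
        rw [hbN_def]; noncomm_ring
      have hstar : ‖aN * ((1:A) - p)‖ = ‖((1:A) - p) * aN‖ := by
        rw [← norm_star (aN * ((1:A) - p)), star_mul, haNsa.star_eq]
        congr 1
        rw [star_sub, star_one, hpsa.star_eq]
      have hb2' : ‖p * (aN * ((1:A) - p))‖ ≤ ‖((1:A) - p) * aN‖ := by
        calc ‖p * (aN * ((1:A) - p))‖ ≤ ‖p‖ * ‖aN * ((1:A) - p)‖ := norm_mul_le _ _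
          _ ≤ 1 * ‖aN * ((1:A) - p)‖ := by gcongr
          _ = ‖((1:A) - p) * aN‖ := by rw [one_mul, hstar]
      have hnc : (n : ℝ) * (2 * c) ≤ ε^2/16 := by
        have hrw : (n:ℝ) * (2 * (ε ^ 2 / (32 * ((n:ℝ) + 1))))
            = (2 * (n:ℝ) * ε^2) / (32 * ((n:ℝ)+1)) := by ring
        rw [hc_def, hrw, div_le_div_iff₀ (by positivity) (by norm_num : (0:ℝ) < 16)]
        nlinarith [sq_nonneg ε]
      have hfinal : (2:ℝ) * ((2/η) * ((n:ℝ) * (2 * c))) ≤ ε/2 := by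
        have h1 : (0:ℝ) < 2/η := by positivity
        have h2 : (2:ℝ) * ((2/η) * ((n:ℝ)*(2*c))) ≤ 2 * ((2/η) * (ε^2/16)) := by
          gcongr
        have hεne : ε ≠ 0 := hε.ne'
        have h3 : (2:ℝ) * ((2/η) * (ε^2/16)) = ε/2 := by
          rw [hη_def]; field_simp; ring
        linarith
      calc ‖aN - bN‖ ≤ ‖((1:A) - p) * aN‖ + ‖p * (aN * ((1:A) - p))‖ := by
            rw [hdec]; exact norm_add_le _ _
        _ ≤ 2 * ‖((1:A) - p) * aN‖ := by linarith
        _ ≤ 2 * ((2/η) * ((n:ℝ) * (2 * c))) := by linarith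
        _ ≤ ε/2 := hfinal
        _ < ε := by linarith
    -- assemble
    refine ⟨Fin.snoc q bN, ?_, ?_, ?_⟩
    · intro i
      induction i using Fin.lastCases with
      | last => rw [Fin.snoc_last]; exact ⟨hbN0, hbNn⟩
      | cast i => rw [Fin.snoc_castSucc]; exact ⟨hq0 i, hqn i⟩
    · intro i j hij
      induction i using Fin.lastCases with
      | last =>
        induction j using Fin.lastCases with
        | last => exact absurd rfl hij
        | cast j => rw [Fin.snoc_last, Fin.snoc_castSucc]; exact hbNq j
      | cast i =>
        induction j using Fin.lastCases with
        | last => rw [Fin.snoc_last, Fin.snoc_castSucc]; exact hqbN i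
        | cast j =>
          rw [Fin.snoc_castSucc, Fin.snoc_castSucc]
          exact hqq i j (fun h => hij (by rw [h]))
    · intro i
      induction i using Fin.lastCases with
      | last => rw [Fin.snoc_last]; exact hlast
      | cast i => rw [Fin.snoc_castSucc]; exact hclose i

/-- In a unital C*-algebra: for every `ε > 0` and `n > 0` there is
`δ > 0` such that any `n` positive contractions `a₁, …, aₙ` with pairwise products of
norm `< δ` can be `ε`-approximated by pairwise orthogonal positive contractions
`b₁, …, bₙ`. -/
theorem orthogonalization_of_almost_orthogonal
    (A : Type*) [CStarAlgebra A] (ε : ℝ) (hε : 0 < ε) (n : ℕ) (hn : 0 < n) :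
    ∃ δ : ℝ, 0 < δ ∧ ∀ a : Fin n → A,
      (∀ i, IsSqPos (a i) ∧ ‖a i‖ ≤ 1) →
      (∀ i j, i ≠ j → ‖a i * a j‖ < δ) →
      ∃ b : Fin n → A,
        (∀ i, IsSqPos (b i) ∧ ‖b i‖ ≤ 1) ∧
        (∀ i j, i ≠ j → b i * b j = 0) ∧
        (∀ i, ‖a i - b i‖ < ε) := by
  letI : PartialOrder A := CStarAlgebra.spectralOrder A
  letI : StarOrderedRing A := CStarAlgebra.spectralOrderedRing A
  rcases subsingleton_or_nontrivial A with hA | hA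
  · refine ⟨1, one_pos, fun a ha hab => ⟨a, ha, fun i j hij => Subsingleton.elim _ _,
      fun i => ?_⟩⟩
    simpa using hε
  · obtain ⟨δ, hδ, H⟩ := aux_main A n ε hε
    refine ⟨δ, hδ, fun a ha hab => ?_⟩
    obtain ⟨b, hb1, hb2, hb3⟩ := H a
      (fun i => ⟨(aux_isSqPos_iff).mp (ha i).1, (ha i).2⟩) hab
    exact ⟨b, fun i => ⟨(aux_isSqPos_iff).mpr (hb1 i).1, (hb1 i).2⟩, hb2, hb3⟩
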